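/- arXiv:math/0511439 — 2 statements merged into one kernel-verified Lean document; each statement's English description precedes it below -/
import Mathlib

section
/- For X > 0, the integral ∫_0^∞ (e^{-(u + X/u)}/u) du is at most C·X^{-1/4}·exp(-2√X) for some absolute constant C > 0. -/
open Real MeasureTheory Set

lemma aux_texp {t : ℝ} (ht : 0 ≤ t) : t * Real.exp (-t) ≤ 1 := by
  have h := Real.add_one_le_exp t
  have h2 : t * Real.exp (-t) ≤ Real.exp t * Real.exp (-t) := by
    apply mul_le_mul_of_nonneg_right _ (Real.exp_pos _).le
    linarith
  rwa [← Real.exp_add, add_neg_cancel, Real.exp_zero] at h2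

lemma aux_texp_half {t : ℝ} (ht : 0 ≤ t) : t * Real.exp (-t) ≤ Real.exp (-(t/2)) := by
  have h1 : t ≤ Real.exp (t/2) := by
    have := Real.add_one_le_exp (t/4)
    have h2 : Real.exp (t/2) = Real.exp (t/4) * Real.exp (t/4) := by
      rw [← Real.exp_add]; ring_nf
    nlinarith [Real.exp_pos (t/4), sq_nonneg (t/4 - 1)]
  calc t * Real.exp (-t) ≤ Real.exp (t/2) * Real.exp (-t) :=
        mul_le_mul_of_nonneg_right h1 (Real.exp_pos _).le
    _ = Real.exp (-(t/2)) := by rw [← Real.exp_add]; ring_nf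

lemma aux_quarter {t : ℝ} (ht : 0 < t) : Real.exp (-t) ≤ t ^ (-(1/4) : ℝ) := by
  have key : t ^ ((1/4) : ℝ) ≤ Real.exp t := by
    rcases le_total t 1 with h | h
    · calc t ^ ((1/4) : ℝ) ≤ 1 := Real.rpow_le_one ht.le h (by norm_num)
        _ ≤ Real.exp t := by nlinarith [Real.add_one_le_exp t]
    · calc t ^ ((1/4) : ℝ) ≤ t ^ (1 : ℝ) :=
          Real.rpow_le_rpow_of_exponent_le h (by norm_num)
        _ = t := Real.rpow_one t
        _ ≤ Real.exp t := by nlinarith [Real.add_one_le_exp t]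
  rw [Real.rpow_neg ht.le, Real.exp_neg]
  exact inv_anti₀ (Real.rpow_pos_of_pos ht _) key

lemma integrable_g {X : ℝ} (hX : 0 < X) :
    IntegrableOn (fun u => Real.exp (-(u + X/u)) / u) (Set.Ioi 0) := by
  apply Integrable.mono' ((exp_neg_integrableOn_Ioi 0 one_pos).const_mul X⁻¹)
  · apply ContinuousOn.aestronglyMeasurable _ measurableSet_Ioi
    apply ContinuousOn.div
    · apply Real.continuous_exp.comp_continuousOn
      apply ContinuousOn.neg
      exact continuousOn_id.add (continuousOn_const.div continuousOn_id
        (fun x hx => ne_of_gt hx))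
    · exact continuousOn_id
    · intro x hx; exact ne_of_gt hx
  · rw [ae_restrict_iff' measurableSet_Ioi]
    filter_upwards with u
    intro hu
    have hu0 : 0 < u := hu
    have ht : (0:ℝ) ≤ X/u := by positivity
    have h1 : (X/u) * Real.exp (-(X/u)) ≤ 1 := aux_texp ht
    have h2 : X * Real.exp (-(X/u)) ≤ u := by
      have h := mul_le_mul_of_nonneg_right h1 hu0.le
      rw [one_mul] at h
      calc X * Real.exp (-(X/u)) = X/u * Real.exp (-(X/u)) * u := by field_simp
        _ ≤ u := h
    have h3 : Real.exp (-(X/u)) ≤ X⁻¹ * u := by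
      have h4 := (le_div_iff₀' hX).mpr h2
      calc Real.exp (-(X/u)) ≤ u / X := h4
        _ = X⁻¹ * u := by ring
    have heq : Real.exp (-(u + X/u)) = Real.exp (-u) * Real.exp (-(X/u)) := by
      rw [← Real.exp_add]; ring_nf
    have key : Real.exp (-(u + X/u)) / u ≤ X⁻¹ * Real.exp (-u) := by
      rw [heq, div_le_iff₀ hu0]
      calc Real.exp (-u) * Real.exp (-(X/u)) ≤ Real.exp (-u) * (X⁻¹ * u) :=
            mul_le_mul_of_nonneg_left h3 (Real.exp_pos _).le
        _ = X⁻¹ * Real.exp (-u) * u := by ring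
    calc ‖Real.exp (-(u + X/u)) / u‖ = Real.exp (-(u + X/u)) / u := by
          rw [Real.norm_eq_abs, abs_of_nonneg (by positivity)]
      _ ≤ X⁻¹ * Real.exp (-u) := key
      _ = X⁻¹ * Real.exp (-1 * u) := by norm_num

lemma small_case {X : ℝ} (hX : 0 < X) (hX1 : X ≤ 1) :
    (∫ u in Set.Ioi (0:ℝ), Real.exp (-(u + X/u)) / u) ≤ 5 * X ^ (-(1/4) : ℝ) := by
  have hXq : (1:ℝ) ≤ X ^ (-(1/4) : ℝ) :=
    Real.one_le_rpow_of_pos_of_le_one_of_nonpos hX hX1 (by norm_num)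
  have hsplit : (∫ u in Set.Ioi (0:ℝ), Real.exp (-(u + X/u)) / u)
      = (∫ u in Set.Ioc (0:ℝ) 1, Real.exp (-(u + X/u)) / u)
      + (∫ u in Set.Ioi (1:ℝ), Real.exp (-(u + X/u)) / u) := by
    rw [← Set.Ioc_union_Ioi_eq_Ioi (zero_le_one : (0:ℝ) ≤ 1)]
    exact setIntegral_union (Set.Ioc_disjoint_Ioi le_rfl) measurableSet_Ioi
      ((integrable_g hX).mono_set Set.Ioc_subset_Ioi_self)
      ((integrable_g hX).mono_set (Set.Ioi_subset_Ioi zero_le_one))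
  have hint_rpow : IntegrableOn (fun u : ℝ => X ^ (-(1/4):ℝ) * u ^ (-(3/4) : ℝ))
      (Set.Ioc (0:ℝ) 1) := by
    apply Integrable.const_mul
    have := intervalIntegral.intervalIntegrable_rpow' (a := 0) (b := 1)
      (r := (-(3/4) : ℝ)) (by norm_num)
    rwa [intervalIntegrable_iff_integrableOn_Ioc_of_le zero_le_one] at this
  have hb1 : (∫ u in Set.Ioc (0:ℝ) 1, Real.exp (-(u + X/u)) / u)
      ≤ ∫ u in Set.Ioc (0:ℝ) 1, X ^ (-(1/4):ℝ) * u ^ (-(3/4) : ℝ) := by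
    apply setIntegral_mono_on
      ((integrable_g hX).mono_set Set.Ioc_subset_Ioi_self)
      hint_rpow measurableSet_Ioc
    intro u hu
    have hu0 : 0 < u := hu.1
    have hXu : 0 < X / u := div_pos hX hu0
    have step1 : Real.exp (-(u + X/u)) ≤ Real.exp (-(X/u)) := by
      apply Real.exp_le_exp.2; nlinarith
    have step2 : Real.exp (-(X/u)) ≤ (X/u) ^ (-(1/4) : ℝ) := aux_quarter hXu
    have step3 : (X/u) ^ (-(1/4) : ℝ) / u = X ^ (-(1/4):ℝ) * u ^ (-(3/4) : ℝ) := by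
      have hu1 : u ^ (-(1/4):ℝ) * u = u ^ ((3/4):ℝ) := by
        nth_rewrite 2 [← Real.rpow_one u]
        rw [← Real.rpow_add hu0]; norm_num
      rw [Real.div_rpow hX.le hu0.le, div_div, hu1, div_eq_mul_inv,
        ← Real.rpow_neg hu0.le]
    calc Real.exp (-(u + X/u)) / u ≤ Real.exp (-(X/u)) / u := by
          gcongr
      _ ≤ (X/u) ^ (-(1/4) : ℝ) / u := by gcongr
      _ = X ^ (-(1/4):ℝ) * u ^ (-(3/4) : ℝ) := step3
  have hval : (∫ u in Set.Ioc (0:ℝ) 1, X ^ (-(1/4):ℝ) * u ^ (-(3/4) : ℝ))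
      = X ^ (-(1/4):ℝ) * 4 := by
    rw [MeasureTheory.integral_const_mul]
    congr 1
    rw [← intervalIntegral.integral_of_le zero_le_one,
      integral_rpow (Or.inl (by norm_num))]
    rw [Real.one_rpow, Real.zero_rpow (by norm_num : (-(3/4):ℝ) + 1 ≠ 0)]
    norm_num
  have hb2 : (∫ u in Set.Ioi (1:ℝ), Real.exp (-(u + X/u)) / u)
      ≤ ∫ u in Set.Ioi (1:ℝ), Real.exp (-u) := by
    apply setIntegral_mono_on
      ((integrable_g hX).mono_set (Set.Ioi_subset_Ioi zero_le_one))
      (by simpa using exp_neg_integrableOn_Ioi 1 one_pos) measurableSet_Ioi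
    intro u hu
    have hu1 : (1:ℝ) ≤ u := le_of_lt hu
    have hu0 : 0 < u := lt_of_lt_of_le one_pos hu1
    calc Real.exp (-(u + X/u)) / u ≤ Real.exp (-(u + X/u)) :=
          div_le_self (Real.exp_pos _).le hu1
      _ ≤ Real.exp (-u) := by
          apply Real.exp_le_exp.2
          have : 0 ≤ X / u := le_of_lt (div_pos hX hu0)
          linarith
  have hval2 : (∫ u in Set.Ioi (1:ℝ), Real.exp (-u)) = Real.exp (-1) :=
    integral_exp_neg_Ioi 1
  have : Real.exp (-1) ≤ 1 := Real.exp_le_one_iff.2 (by norm_num)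
  rw [hsplit]
  nlinarith [hb1, hb2, hval, hval2]

set_option maxHeartbeats 1000000 in
lemma big_case {X : ℝ} (hX : 1 ≤ X) :
    (∫ u in Set.Ioi (0:ℝ), Real.exp (-(u + X/u)) / u)
      ≤ 10 * X ^ (-(1/4) : ℝ) * Real.exp (-2 * Real.sqrt X) := by
  have hX0 : 0 < X := lt_of_lt_of_le one_pos hX
  set s : ℝ := Real.sqrt X with hs_def
  have hs1 : 1 ≤ s := by
    rw [hs_def, show (1:ℝ) = Real.sqrt 1 by rw [Real.sqrt_one]]
    exact Real.sqrt_le_sqrt hX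
  have hs0 : 0 < s := lt_of_lt_of_le one_pos hs1
  have hss : s ^ 2 = X := Real.sq_sqrt hX0.le
  set r : ℝ := Real.sqrt s with hr_def
  have hr1 : 1 ≤ r := by
    rw [hr_def, show (1:ℝ) = Real.sqrt 1 by rw [Real.sqrt_one]]
    exact Real.sqrt_le_sqrt hs1
  have hr0 : 0 < r := lt_of_lt_of_le one_pos hr1
  have hrr : r ^ 2 = s := Real.sq_sqrt hs0.le
  have hrs : r ≤ s := by nlinarith
  have hr4 : r = X ^ ((1/4) : ℝ) := by
    rw [hr_def, hs_def, Real.sqrt_eq_rpow, Real.sqrt_eq_rpow, ← Real.rpow_mul hX0.le]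
    norm_num
  have hT : X ^ (-(1/4) : ℝ) = r⁻¹ := by
    rw [Real.rpow_neg hX0.le, ← hr4]
  -- the identity
  have harg2 : ∀ u : ℝ, 0 < u →
      Real.exp (-(u + X/u)) = Real.exp (-(2*s)) * Real.exp (-((u-s)^2/u)) := by
    intro u hu0
    rw [← Real.exp_add]
    congr 1
    field_simp
    linear_combination hss
  have hid : EqOn (fun u => Real.exp (-(u + X/u)) / u)
      (fun u => Real.exp (-(2*s)) * (Real.exp (-((u-s)^2/u)) / u)) (Set.Ioi 0) := by
    intro u hu
    simp only
    rw [harg2 u hu, mul_div_assoc]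
  rw [setIntegral_congr_fun measurableSet_Ioi hid, MeasureTheory.integral_const_mul]
  -- integrability of h
  have hid2 : EqOn (fun u => Real.exp (2*s) * (Real.exp (-(u + X/u)) / u))
      (fun u => Real.exp (-((u-s)^2/u)) / u) (Set.Ioi 0) := by
    intro u hu
    simp only
    rw [harg2 u hu, mul_div_assoc, ← mul_assoc, ← Real.exp_add, add_neg_cancel,
      Real.exp_zero, one_mul]
  have hInt : IntegrableOn (fun u => Real.exp (-((u-s)^2/u)) / u) (Set.Ioi 0) :=
    MeasureTheory.IntegrableOn.congr_fun
      ((integrable_g hX0).const_mul (Real.exp (2*s))) hid2 measurableSet_Ioi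
  -- splitting
  have hsub1 : Set.Ioc (0:ℝ) (s/2) ⊆ Set.Ioi 0 := Set.Ioc_subset_Ioi_self
  have hsub2 : Set.Ioi (s/2) ⊆ Set.Ioi (0:ℝ) := Set.Ioi_subset_Ioi (by positivity)
  have hsub3 : Set.Ioc (s/2) (2*s) ⊆ Set.Ioi (0:ℝ) :=
    Set.Ioc_subset_Ioi_self.trans hsub2
  have hsub4 : Set.Ioi (2*s) ⊆ Set.Ioi (0:ℝ) := Set.Ioi_subset_Ioi (by positivity)
  have hsplit : (∫ u in Set.Ioi (0:ℝ), Real.exp (-((u-s)^2/u)) / u)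
      = (∫ u in Set.Ioc (0:ℝ) (s/2), Real.exp (-((u-s)^2/u)) / u)
      + ((∫ u in Set.Ioc (s/2) (2*s), Real.exp (-((u-s)^2/u)) / u)
        + (∫ u in Set.Ioi (2*s), Real.exp (-((u-s)^2/u)) / u)) := by
    rw [← setIntegral_union (Set.Ioc_disjoint_Ioi le_rfl) measurableSet_Ioi
      (hInt.mono_set hsub3) (hInt.mono_set hsub4),
      Set.Ioc_union_Ioi_eq_Ioi (by linarith : s/2 ≤ 2*s),
      ← setIntegral_union (Set.Ioc_disjoint_Ioi le_rfl) measurableSet_Ioi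
      (hInt.mono_set hsub1) (hInt.mono_set hsub2),
      Set.Ioc_union_Ioi_eq_Ioi (by positivity : (0:ℝ) ≤ s/2)]
  rw [hsplit]
  -- Piece 1
  have hP1 : (∫ u in Set.Ioc (0:ℝ) (s/2), Real.exp (-((u-s)^2/u)) / u)
      ≤ 2 * r⁻¹ := by
    have hb1 : (∫ u in Set.Ioc (0:ℝ) (s/2), Real.exp (-((u-s)^2/u)) / u)
        ≤ ∫ _u in Set.Ioc (0:ℝ) (s/2), (4/s^2) * Real.exp (-(s/4)) := by
      apply setIntegral_mono_on (hInt.mono_set hsub1)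
        (integrableOn_const measure_Ioc_lt_top.ne) measurableSet_Ioc
      intro u hu
      have hu0 : 0 < u := hu.1
      have hu2 : u ≤ s/2 := hu.2
      set t : ℝ := s^2/(4*u) with ht_def
      have ht0 : 0 < t := by positivity
      have step1 : Real.exp (-((u-s)^2/u)) ≤ Real.exp (-t) := by
        apply Real.exp_le_exp.2
        rw [neg_le_neg_iff, ht_def, div_le_div_iff₀ (by positivity) hu0]
        nlinarith [mul_nonneg (mul_nonneg (by linarith : (0:ℝ) ≤ 3*s/2 - u)
          (by linarith : (0:ℝ) ≤ s/2 - u)) hu0.le]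
      have step2 : Real.exp (-t) / u = (4/s^2) * (t * Real.exp (-t)) := by
        rw [ht_def]; field_simp
      have step3 : t * Real.exp (-t) ≤ Real.exp (-(t/2)) := aux_texp_half ht0.le
      have step4 : Real.exp (-(t/2)) ≤ Real.exp (-(s/4)) := by
        apply Real.exp_le_exp.2
        have h5 : s/2 ≤ t := by
          rw [ht_def, le_div_iff₀ (by positivity)]
          nlinarith
        linarith
      calc Real.exp (-((u-s)^2/u)) / u ≤ Real.exp (-t) / u := by gcongr
        _ = (4/s^2) * (t * Real.exp (-t)) := step2
        _ ≤ (4/s^2) * Real.exp (-(t/2)) := by gcongr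
        _ ≤ (4/s^2) * Real.exp (-(s/4)) := by gcongr
    have hval : (∫ _u in Set.Ioc (0:ℝ) (s/2), (4/s^2) * Real.exp (-(s/4)))
        = (s/2) * ((4/s^2) * Real.exp (-(s/4))) := by
      rw [setIntegral_const, measureReal_def, Real.volume_Ioc, smul_eq_mul, sub_zero,
        ENNReal.toReal_ofReal (by positivity)]
    have hfin : (s/2) * ((4/s^2) * Real.exp (-(s/4))) ≤ 2 * r⁻¹ := by
      have he : Real.exp (-(s/4)) ≤ 1 := Real.exp_le_one_iff.2 (by linarith)
      calc (s/2) * ((4/s^2) * Real.exp (-(s/4))) = (2/s) * Real.exp (-(s/4)) := by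
            field_simp; ring
        _ ≤ (2/s) * 1 := by gcongr
        _ = 2 * s⁻¹ := by rw [mul_one, div_eq_mul_inv]
        _ ≤ 2 * r⁻¹ := by gcongr
    rw [hval] at hb1
    exact hb1.trans hfin
  -- Piece 2
  have hP2 : (∫ u in Set.Ioc (s/2) (2*s), Real.exp (-((u-s)^2/u)) / u)
      ≤ 6 * r⁻¹ := by
    set b : ℝ := 1/(2*s) with hb_def
    have hb0 : 0 < b := by positivity
    have hphi : Integrable (fun u : ℝ => Real.exp (-b * (u - s)^2)) :=
      (integrable_exp_neg_mul_sq hb0).comp_sub_right s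
    have hb1 : (∫ u in Set.Ioc (s/2) (2*s), Real.exp (-((u-s)^2/u)) / u)
        ≤ ∫ u in Set.Ioc (s/2) (2*s), (2/s) * Real.exp (-b * (u - s)^2) := by
      apply setIntegral_mono_on (hInt.mono_set hsub3)
        ((hphi.const_mul _).integrableOn) measurableSet_Ioc
      intro u hu
      have hu1 : s/2 < u := hu.1
      have hu2 : u ≤ 2*s := hu.2
      have hu0 : 0 < u := lt_trans (by positivity) hu1
      have key1 : -((u-s)^2/u) ≤ -b * (u - s)^2 := by
        have h6 : b * (u-s)^2 = (u-s)^2 / (2*s) := by rw [hb_def]; ring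
        have h7 : (u-s)^2/(2*s) ≤ (u-s)^2/u := by gcongr
        nlinarith [h6, h7]
      have key2 : (u:ℝ)⁻¹ ≤ 2/s := by
        rw [inv_eq_one_div, div_le_div_iff₀ hu0 hs0]
        nlinarith
      calc Real.exp (-((u-s)^2/u)) / u
          ≤ Real.exp (-b * (u - s)^2) / u := by gcongr
        _ = Real.exp (-b * (u - s)^2) * u⁻¹ := div_eq_mul_inv _ _
        _ ≤ Real.exp (-b * (u - s)^2) * (2/s) :=
            mul_le_mul_of_nonneg_left key2 (Real.exp_pos _).le
        _ = (2/s) * Real.exp (-b * (u - s)^2) := mul_comm _ _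
    have hb2 : (∫ u in Set.Ioc (s/2) (2*s), (2/s) * Real.exp (-b * (u - s)^2))
        = (2/s) * ∫ u in Set.Ioc (s/2) (2*s), Real.exp (-b * (u - s)^2) :=
      MeasureTheory.integral_const_mul _ _
    have hb3 : (∫ u in Set.Ioc (s/2) (2*s), Real.exp (-b * (u - s)^2))
        ≤ ∫ u : ℝ, Real.exp (-b * (u - s)^2) :=
      setIntegral_le_integral hphi (ae_of_all _ fun x => (Real.exp_pos _).le)
    have hb4 : (∫ u : ℝ, Real.exp (-b * (u - s)^2)) = Real.sqrt (π / b) := by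
      calc (∫ u : ℝ, Real.exp (-b * (u - s)^2))
          = ∫ u : ℝ, Real.exp (-b * u^2) :=
            integral_sub_right_eq_self (fun a => Real.exp (-b * a^2)) s
        _ = Real.sqrt (π / b) := integral_gaussian b
    have hsq : Real.sqrt (π / b) ≤ 3 * r := by
      have hpb : π / b = 2*π*s := by rw [hb_def]; field_simp
      rw [hpb]
      have hpi9 : 2*π*s ≤ 9*s := by
        have h2pi : 2*π ≤ 9 := by nlinarith [Real.pi_le_four]
        nlinarith
      calc Real.sqrt (2*π*s) ≤ Real.sqrt (9*s) := Real.sqrt_le_sqrt hpi9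
        _ = 3 * Real.sqrt s := by
            rw [show (9:ℝ)*s = 3^2 * s by norm_num,
              Real.sqrt_mul (by positivity), Real.sqrt_sq (by norm_num)]
        _ = 3 * r := rfl
    have hfin : (2/s) * (3*r) = 6 * r⁻¹ := by
      rw [← hrr]; field_simp; ring
    calc (∫ u in Set.Ioc (s/2) (2*s), Real.exp (-((u-s)^2/u)) / u)
        ≤ (2/s) * ∫ u in Set.Ioc (s/2) (2*s), Real.exp (-b * (u - s)^2) := by
          rw [← hb2]; exact hb1
      _ ≤ (2/s) * (3*r) := by
          apply mul_le_mul_of_nonneg_left _ (by positivity)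
          calc (∫ u in Set.Ioc (s/2) (2*s), Real.exp (-b * (u - s)^2))
              ≤ ∫ u : ℝ, Real.exp (-b * (u - s)^2) := hb3
            _ = Real.sqrt (π / b) := hb4
            _ ≤ 3 * r := hsq
      _ = 6 * r⁻¹ := hfin
  -- Piece 3
  have hP3 : (∫ u in Set.Ioi (2*s), Real.exp (-((u-s)^2/u)) / u)
      ≤ 2 * r⁻¹ := by
    have hpsi : IntegrableOn (fun u : ℝ => Real.exp (-(1/4 * u))) (Set.Ioi (2*s)) := by
      have := exp_neg_integrableOn_Ioi (2*s) (show (0:ℝ) < 1/4 by norm_num)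
      simpa [neg_mul] using this
    have hb1 : (∫ u in Set.Ioi (2*s), Real.exp (-((u-s)^2/u)) / u)
        ≤ ∫ u in Set.Ioi (2*s), (1/(2*s)) * Real.exp (-(1/4 * u)) := by
      apply setIntegral_mono_on (hInt.mono_set hsub4)
        (hpsi.const_mul _) measurableSet_Ioi
      intro u hu
      have hu1 : 2*s < u := hu
      have hu0 : 0 < u := lt_trans (by positivity) hu1
      have key1 : 1/4 * u ≤ (u-s)^2/u := by
        rw [le_div_iff₀ hu0]
        nlinarith [mul_nonneg (by linarith : (0:ℝ) ≤ u/2 - s)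
          (by linarith : (0:ℝ) ≤ 3*u/2 - s)]
      have key2 : (u:ℝ)⁻¹ ≤ 1/(2*s) := by
        rw [inv_eq_one_div, div_le_div_iff₀ hu0 (by positivity)]
        nlinarith
      calc Real.exp (-((u-s)^2/u)) / u
          ≤ Real.exp (-(1/4 * u)) / u := by gcongr
        _ = Real.exp (-(1/4 * u)) * u⁻¹ := div_eq_mul_inv _ _
        _ ≤ Real.exp (-(1/4 * u)) * (1/(2*s)) :=
            mul_le_mul_of_nonneg_left key2 (Real.exp_pos _).le
        _ = (1/(2*s)) * Real.exp (-(1/4 * u)) := mul_comm _ _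
    have hval : (∫ u in Set.Ioi (2*s), (1/(2*s)) * Real.exp (-(1/4 * u)))
        = (1/(2*s)) * (4 * Real.exp (-(s/2))) := by
      rw [MeasureTheory.integral_const_mul]
      congr 1
      have h8 := integral_comp_mul_left_Ioi (fun y => Real.exp (-y)) (2*s)
        (show (0:ℝ) < 1/4 by norm_num)
      rw [show (1:ℝ)/4 * (2*s) = s/2 by ring, integral_exp_neg_Ioi, smul_eq_mul] at h8
      rw [h8]
      norm_num
    have hfin : (1/(2*s)) * (4 * Real.exp (-(s/2))) ≤ 2 * r⁻¹ := by
      have he : Real.exp (-(s/2)) ≤ 1 := Real.exp_le_one_iff.2 (by linarith)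
      calc (1/(2*s)) * (4 * Real.exp (-(s/2))) = (2/s) * Real.exp (-(s/2)) := by
            field_simp; ring
        _ ≤ (2/s) * 1 := by gcongr
        _ = 2 * s⁻¹ := by rw [mul_one, div_eq_mul_inv]
        _ ≤ 2 * r⁻¹ := by gcongr
    calc (∫ u in Set.Ioi (2*s), Real.exp (-((u-s)^2/u)) / u)
        ≤ ∫ u in Set.Ioi (2*s), (1/(2*s)) * Real.exp (-(1/4 * u)) := hb1
      _ = (1/(2*s)) * (4 * Real.exp (-(s/2))) := hval
      _ ≤ 2 * r⁻¹ := hfin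
  -- combine
  have hsum : (∫ u in Set.Ioc (0:ℝ) (s/2), Real.exp (-((u-s)^2/u)) / u)
      + ((∫ u in Set.Ioc (s/2) (2*s), Real.exp (-((u-s)^2/u)) / u)
        + (∫ u in Set.Ioi (2*s), Real.exp (-((u-s)^2/u)) / u)) ≤ 10 * r⁻¹ := by
    linarith
  calc Real.exp (-(2*s)) * ((∫ u in Set.Ioc (0:ℝ) (s/2), Real.exp (-((u-s)^2/u)) / u)
      + ((∫ u in Set.Ioc (s/2) (2*s), Real.exp (-((u-s)^2/u)) / u)
        + (∫ u in Set.Ioi (2*s), Real.exp (-((u-s)^2/u)) / u)))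
      ≤ Real.exp (-(2*s)) * (10 * r⁻¹) :=
        mul_le_mul_of_nonneg_left hsum (Real.exp_pos _).le
    _ = 10 * X ^ (-(1/4) : ℝ) * Real.exp (-2 * Real.sqrt X) := by
        rw [hT, show (-2 * Real.sqrt X) = -(2*s) by rw [← hs_def]; ring]
        ring


/-- For `X > 0`, `∫_0^∞ e^{-(u + X/u)}/u du ≤ C·X^{-1/4}·exp(-2√X)` for some
absolute constant `C > 0`. -/
theorem stmt_5 :
    ∃ C : ℝ, 0 < C ∧ ∀ X : ℝ, 0 < X →
      (∫ u in Set.Ioi (0 : ℝ), Real.exp (-(u + X / u)) / u)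
        ≤ C * X ^ (-(1 / 4) : ℝ) * Real.exp (-2 * Real.sqrt X) := by
  refine ⟨100, by norm_num, fun X hX => ?_⟩
  have hT0 : 0 < X ^ (-(1/4) : ℝ) := Real.rpow_pos_of_pos hX _
  rcases le_or_gt 1 X with h1 | h1
  · calc (∫ u in Set.Ioi (0 : ℝ), Real.exp (-(u + X / u)) / u)
        ≤ 10 * X ^ (-(1/4) : ℝ) * Real.exp (-2 * Real.sqrt X) := big_case h1
      _ ≤ 100 * X ^ (-(1/4) : ℝ) * Real.exp (-2 * Real.sqrt X) := by
        have hE : (0:ℝ) < Real.exp (-2 * Real.sqrt X) := Real.exp_pos _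
        nlinarith
  · have h2 : Real.exp (-2 : ℝ) ≤ Real.exp (-2 * Real.sqrt X) := by
      apply Real.exp_le_exp.2
      have : Real.sqrt X ≤ 1 := Real.sqrt_le_one.2 h1.le
      nlinarith
    have h3 : Real.exp (2:ℝ) ≤ 20 := by
      have he1 : Real.exp 1 < 2.7182818286 := Real.exp_one_lt_d9
      have h22 : Real.exp (2:ℝ) = Real.exp 1 * Real.exp 1 := by
        rw [← Real.exp_add]; norm_num
      nlinarith [Real.exp_pos 1]
    have h4 : (1:ℝ)/20 ≤ Real.exp (-2 * Real.sqrt X) := by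
      have hinv : Real.exp (-2 : ℝ) = (Real.exp 2)⁻¹ := by rw [← Real.exp_neg]
      have : (1:ℝ)/20 ≤ (Real.exp 2)⁻¹ := by
        rw [div_le_iff₀ (by norm_num), inv_mul_eq_div, le_div_iff₀ (Real.exp_pos 2)]
        linarith
      linarith [hinv ▸ this, h2]
    calc (∫ u in Set.Ioi (0 : ℝ), Real.exp (-(u + X / u)) / u)
        ≤ 5 * X ^ (-(1/4) : ℝ) := small_case hX h1.le
      _ ≤ 100 * X ^ (-(1/4) : ℝ) * Real.exp (-2 * Real.sqrt X) := by
        nlinarith [hT0, h4]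
end

section
/- Suppose g : ℝ_{>0} → ℝ satisfies 0 ≤ g(X) ≤ C·X^{-1/4}e^{-2√X} for all X > 0. Then for any W ≥ 1, ∑_{m=1}^∞ m^{-1} ∑_{n=1}^∞ √n · g(4π²nm²/W) converges, and is O(W^{3/2}). -/
open Real

private lemma aux1 (t : ℝ) (ht : 0 ≤ t) : t * Real.exp (-(t/2)) ≤ 1 := by
  have h2 : Real.exp (t/2) = Real.exp (t/4) * Real.exp (t/4) := by
    rw [← Real.exp_add]; ring_nf
  have h3 : t ≤ Real.exp (t/2) := by
    nlinarith [Real.add_one_le_exp (t/4), Real.exp_pos (t/4), sq_nonneg (t/4 - 1)]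
  rw [Real.exp_neg, ← div_eq_mul_inv, div_le_one (Real.exp_pos _)]
  exact h3

private lemma sumv (a : ℝ) (ha : 0 < a) :
    Summable (fun n : ℕ => Real.exp (-(a * Real.sqrt ((n:ℝ)+1)))) ∧
    ∑' n : ℕ, Real.exp (-(a * Real.sqrt ((n:ℝ)+1))) ≤ 12 / a^2 := by
  set w : ℕ → ℝ := fun n => Real.exp (-(a/2 * Real.sqrt ((n:ℝ)+1))) with hw
  have key : ∀ n : ℕ, Real.exp (-(a * Real.sqrt ((n:ℝ)+1)))
      ≤ 12/a^2 * (w n - w (n+1)) := by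
    intro n
    set x := Real.sqrt ((n:ℝ)+1) with hxdef
    set y := Real.sqrt ((n:ℝ)+2) with hydef
    have hcast : (((n+1:ℕ)):ℝ) + 1 = (n:ℝ)+2 := by push_cast; ring
    have hwn1 : w (n+1) = Real.exp (-(a/2 * y)) := by
      show Real.exp (-(a/2 * Real.sqrt (((n+1:ℕ):ℝ)+1))) = _
      rw [hcast]
    have hx2 : x^2 = (n:ℝ)+1 := Real.sq_sqrt (by positivity)
    have hy2 : y^2 = (n:ℝ)+2 := Real.sq_sqrt (by positivity)
    have hx1 : 1 ≤ x := by
      have h := Real.sqrt_le_sqrt (show (1:ℝ) ≤ (n:ℝ)+1 by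
        have := Nat.cast_nonneg (α := ℝ) n; linarith)
      rwa [Real.sqrt_one] at h
    have hx0 : 0 < x := by linarith
    have hy0 : 0 ≤ y := Real.sqrt_nonneg _
    have hxy : x ≤ y := Real.sqrt_le_sqrt (by linarith)
    have hyx : y ≤ 3/2 * x := by
      have h1 : (n:ℝ)+2 ≤ (3/2*x)^2 := by nlinarith
      calc y ≤ Real.sqrt ((3/2*x)^2) := Real.sqrt_le_sqrt h1
        _ = 3/2*x := Real.sqrt_sq (by linarith)
    have hsub : 1/(3*x) ≤ y - x := by
      have hprod : (y - x)*(y + x) = 1 := by nlinarith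
      have hxp : 0 < y + x := by linarith
      have hyx3 : y + x ≤ 3*x := by linarith
      have heq : y - x = 1/(y+x) := by
        field_simp
        linarith [hprod]
      rw [heq]
      exact one_div_le_one_div_of_le hxp hyx3
    have step1 : a/2*(y-x) * Real.exp (-(a/2*y))
        ≤ Real.exp (-(a/2*x)) - Real.exp (-(a/2*y)) := by
      have hE : Real.exp (-(a/2*x)) = Real.exp (a/2*(y-x)) * Real.exp (-(a/2*y)) := by
        rw [← Real.exp_add]; congr 1; ring
      nlinarith [Real.add_one_le_exp (a/2*(y-x)), Real.exp_pos (-(a/2*y))]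
    have step2 : a/2*(1/(3*x)) * Real.exp (-(a/2*(3/2*x)))
        ≤ a/2*(y-x) * Real.exp (-(a/2*y)) := by
      apply mul_le_mul
      · exact mul_le_mul_of_nonneg_left hsub (by positivity)
      · apply Real.exp_le_exp.mpr; nlinarith
      · positivity
      · exact mul_nonneg (by positivity) (by linarith)
    have step3 : Real.exp (-(a * x))
        ≤ 12/a^2 * (a/2*(1/(3*x)) * Real.exp (-(a/2*(3/2*x)))) := by
      have ht := aux1 (a*x/2) (by positivity)
      have h5 : Real.exp (-(a*x/2/2)) ≤ 2/(a*x) := by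
        rw [le_div_iff₀ (by positivity : (0:ℝ) < a*x)]
        nlinarith [ht]
      have hsplit : Real.exp (-(a*x)) = Real.exp (-(a*x/2/2)) * Real.exp (-(a/2*(3/2*x))) := by
        rw [← Real.exp_add]; congr 1; ring
      calc Real.exp (-(a*x)) = Real.exp (-(a*x/2/2)) * Real.exp (-(a/2*(3/2*x))) := hsplit
        _ ≤ (2/(a*x)) * Real.exp (-(a/2*(3/2*x))) :=
            mul_le_mul_of_nonneg_right h5 (Real.exp_pos _).le
        _ = 12/a^2 * (a/2*(1/(3*x)) * Real.exp (-(a/2*(3/2*x)))) := by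
            field_simp
            ring
    calc Real.exp (-(a*x)) ≤ 12/a^2 * (a/2*(1/(3*x)) * Real.exp (-(a/2*(3/2*x)))) := step3
      _ ≤ 12/a^2 * (Real.exp (-(a/2*x)) - Real.exp (-(a/2*y))) := by
          apply mul_le_mul_of_nonneg_left (le_trans step2 step1) (by positivity)
      _ = 12/a^2 * (w n - w (n+1)) := by rw [hwn1]
  have hpart : ∀ N : ℕ, ∑ n ∈ Finset.range N, Real.exp (-(a * Real.sqrt ((n:ℝ)+1))) ≤ 12/a^2 := by
    intro N
    have h1 : ∑ n ∈ Finset.range N, Real.exp (-(a * Real.sqrt ((n:ℝ)+1)))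
        ≤ ∑ n ∈ Finset.range N, 12/a^2 * (w n - w (n+1)) :=
      Finset.sum_le_sum (fun n _ => key n)
    have h2 : ∑ n ∈ Finset.range N, (w n - w (n+1)) = w 0 - w N := Finset.sum_range_sub' w N
    have h3 : (0:ℝ) ≤ w N := (Real.exp_pos _).le
    have h4 : w 0 ≤ 1 := by
      calc w 0 ≤ Real.exp 0 := Real.exp_le_exp.mpr (by
            have : 0 ≤ a/2 * Real.sqrt (((0:ℕ):ℝ)+1) := by positivity
            simpa using neg_nonpos.mpr this)
        _ = 1 := Real.exp_zero
    calc ∑ n ∈ Finset.range N, Real.exp (-(a * Real.sqrt ((n:ℝ)+1)))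
        ≤ ∑ n ∈ Finset.range N, 12/a^2 * (w n - w (n+1)) := h1
      _ = 12/a^2 * (w 0 - w N) := by rw [← Finset.mul_sum, h2]
      _ ≤ 12/a^2 * 1 := mul_le_mul_of_nonneg_left (by linarith) (by positivity)
      _ = 12/a^2 := mul_one _
  exact ⟨summable_of_sum_range_le (fun n => (Real.exp_pos _).le) hpart,
    tsum_le_of_sum_range_le (fun n => (Real.exp_pos _).le) hpart⟩


private lemma aux2 (y : ℝ) (hy : 0 ≤ y) : Real.sqrt y * Real.exp (-y) ≤ 1 := by
  have h1 : y ≤ (Real.exp y)^2 := by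
    nlinarith [Real.add_one_le_exp y, Real.exp_pos y]
  have h2 : Real.sqrt y ≤ Real.exp y := by
    calc Real.sqrt y ≤ Real.sqrt ((Real.exp y)^2) := Real.sqrt_le_sqrt h1
    _ = Real.exp y := Real.sqrt_sq (Real.exp_pos y).le
  rw [Real.exp_neg, ← div_eq_mul_inv, div_le_one (Real.exp_pos _)]
  exact h2

private lemma core (a M N s : ℝ) (ha : 0 < a) (hM : 1 ≤ M) (hN : 1 ≤ N)
    (hs : s = 2*a*M*Real.sqrt N) :
    Real.sqrt N * ((Real.sqrt s)⁻¹ * Real.exp (-(2*s)))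
      ≤ (2*a*M)⁻¹ * (Real.exp (-(a*M)) * Real.exp (-(a*Real.sqrt N))) := by
  have h1N : 1 ≤ Real.sqrt N := by
    have h := Real.sqrt_le_sqrt hN
    rwa [Real.sqrt_one] at h
  have hM0 : (0:ℝ) < M := by linarith
  have hs0 : 0 < s := by rw [hs]; positivity
  have hss : s * (Real.sqrt s)⁻¹ = Real.sqrt s := by
    nth_rewrite 1 [← Real.mul_self_sqrt hs0.le]
    have : Real.sqrt s ≠ 0 := by positivity
    field_simp
  have hsqN : Real.sqrt N = s * (2*a*M)⁻¹ := by
    rw [hs]; field_simp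
  calc Real.sqrt N * ((Real.sqrt s)⁻¹ * Real.exp (-(2*s)))
      = (2*a*M)⁻¹ * (s * (Real.sqrt s)⁻¹ * Real.exp (-(2*s))) := by
        rw [hsqN]; ring
    _ = (2*a*M)⁻¹ * (Real.sqrt s * Real.exp (-(2*s))) := by rw [hss]
    _ ≤ (2*a*M)⁻¹ * (Real.exp (-(a*M)) * Real.exp (-(a*Real.sqrt N))) := by
        apply mul_le_mul_of_nonneg_left _ (by positivity)
        have hsplit : Real.sqrt s * Real.exp (-(2*s))
            = (Real.sqrt s * Real.exp (-s)) * Real.exp (-s) := by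
          rw [mul_assoc, ← Real.exp_add]; congr 2; ring
        calc Real.sqrt s * Real.exp (-(2*s))
            = (Real.sqrt s * Real.exp (-s)) * Real.exp (-s) := hsplit
          _ ≤ 1 * Real.exp (-s) :=
              mul_le_mul_of_nonneg_right (aux2 s hs0.le) (Real.exp_pos _).le
          _ = Real.exp (-s) := one_mul _
          _ ≤ Real.exp (-(a*M) + -(a*Real.sqrt N)) := by
              apply Real.exp_le_exp.mpr
              rw [hs]
              nlinarith [mul_nonneg (mul_nonneg ha.le (sub_nonneg.mpr hM))
                (sub_nonneg.mpr h1N), mul_nonneg ha.le (sub_nonneg.mpr h1N)]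
          _ = Real.exp (-(a*M)) * Real.exp (-(a*Real.sqrt N)) := Real.exp_add _ _


private lemma sumu (a : ℝ) (ha : 0 < a) :
    Summable (fun m : ℕ => (((m:ℝ)+1)^2)⁻¹ * Real.exp (-(a*((m:ℝ)+1)))) ∧
    ∑' m : ℕ, (((m:ℝ)+1)^2)⁻¹ * Real.exp (-(a*((m:ℝ)+1))) ≤ 2 := by
  set f : ℕ → ℝ := fun i => 2*((i:ℝ)+1)⁻¹ with hf
  have key : ∀ m : ℕ, (((m:ℝ)+1)^2)⁻¹ * Real.exp (-(a*((m:ℝ)+1))) ≤ f m - f (m+1) := by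
    intro m
    have hm0 : (0:ℝ) < (m:ℝ)+1 := by positivity
    have hm2 : (0:ℝ) < (m:ℝ)+2 := by positivity
    have hexp : Real.exp (-(a*((m:ℝ)+1))) ≤ 1 := by
      calc Real.exp (-(a*((m:ℝ)+1))) ≤ Real.exp 0 :=
            Real.exp_le_exp.mpr (neg_nonpos.mpr (by positivity))
        _ = 1 := Real.exp_zero
    have h1 : (((m:ℝ)+1)^2)⁻¹ * Real.exp (-(a*((m:ℝ)+1))) ≤ (((m:ℝ)+1)^2)⁻¹ := by
      calc (((m:ℝ)+1)^2)⁻¹ * Real.exp (-(a*((m:ℝ)+1))) ≤ (((m:ℝ)+1)^2)⁻¹ * 1 :=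
            mul_le_mul_of_nonneg_left hexp (by positivity)
        _ = (((m:ℝ)+1)^2)⁻¹ := mul_one _
    have h2 : f m - f (m+1) = 2*((m:ℝ)+1)⁻¹ - 2*((m:ℝ)+2)⁻¹ := by
      simp only [hf]
      congr 2
      push_cast; ring
    have h3 : (((m:ℝ)+1)^2)⁻¹ ≤ 2*((m:ℝ)+1)⁻¹ - 2*((m:ℝ)+2)⁻¹ := by
      have hne1 : ((m:ℝ)+1) ≠ 0 := ne_of_gt hm0
      have hne2 : ((m:ℝ)+2) ≠ 0 := ne_of_gt hm2
      rw [inv_le_iff_one_le_mul₀ (by positivity)]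
      field_simp
      nlinarith [Nat.cast_nonneg (α := ℝ) m]
    linarith [h1, h2.symm ▸ h3]
  have hpart : ∀ N : ℕ, ∑ m ∈ Finset.range N, (((m:ℝ)+1)^2)⁻¹ * Real.exp (-(a*((m:ℝ)+1))) ≤ 2 := by
    intro N
    have h2 : ∑ m ∈ Finset.range N, (f m - f (m+1)) = f 0 - f N := Finset.sum_range_sub' f N
    have h3 : (0:ℝ) ≤ f N := by simp only [hf]; positivity
    have h4 : f 0 ≤ 2 := by simp [hf]
    calc ∑ m ∈ Finset.range N, (((m:ℝ)+1)^2)⁻¹ * Real.exp (-(a*((m:ℝ)+1)))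
        ≤ ∑ m ∈ Finset.range N, (f m - f (m+1)) := Finset.sum_le_sum (fun m _ => key m)
      _ = f 0 - f N := h2
      _ ≤ 2 := by linarith
  exact ⟨summable_of_sum_range_le (fun m => by positivity) hpart,
    tsum_le_of_sum_range_le (fun m => by positivity) hpart⟩


open Real in
/-- If `0 ≤ g(X) ≤ C X^{-1/4} e^{-2√X}` for all `X > 0`, then for `W ≥ 1` the
double sum `∑_{m ≥ 1} m⁻¹ ∑_{n ≥ 1} √n · g(4π²nm²/W)` converges and is
`O(W^{3/2})`. -/
theorem stmt_18 (g : ℝ → ℝ) (C : ℝ) (hC : 0 < C)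
    (hg : ∀ X : ℝ, 0 < X →
      0 ≤ g X ∧ g X ≤ C * X ^ (-(1 / 4) : ℝ) * Real.exp (-2 * Real.sqrt X)) :
    ∃ C' : ℝ, 0 < C' ∧ ∀ W : ℝ, 1 ≤ W →
      Summable (fun q : ℕ × ℕ =>
        ((q.1 + 1 : ℝ))⁻¹ * (Real.sqrt (q.2 + 1) *
          g (4 * π ^ 2 * (q.2 + 1) * (q.1 + 1) ^ 2 / W))) ∧
      (∑' q : ℕ × ℕ,
        ((q.1 + 1 : ℝ))⁻¹ * (Real.sqrt (q.2 + 1) *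
          g (4 * π ^ 2 * (q.2 + 1) * (q.1 + 1) ^ 2 / W)))
        ≤ C' * W ^ ((3 : ℝ) / 2) := by
  refine ⟨C, hC, fun W hW => ?_⟩
  have hW0 : (0:ℝ) < W := lt_of_lt_of_le one_pos hW
  have hsW : 0 < Real.sqrt W := Real.sqrt_pos.mpr hW0
  have hsW2 : Real.sqrt W * Real.sqrt W = W := Real.mul_self_sqrt hW0.le
  set a : ℝ := π / Real.sqrt W with haDef
  have ha : 0 < a := div_pos Real.pi_pos hsW
  set u : ℕ → ℝ := fun m => (((m:ℝ)+1)^2)⁻¹ * Real.exp (-(a*((m:ℝ)+1))) with hu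
  set v : ℕ → ℝ := fun n => Real.exp (-(a * Real.sqrt ((n:ℝ)+1))) with hv
  set K : ℝ := C * Real.sqrt W / (2*π) with hK
  have hKpos : 0 < K := by positivity
  have hta : a^2 = π^2 / W := by
    rw [haDef, div_pow, Real.sq_sqrt hW0.le]
  have hunn : ∀ m, 0 ≤ u m := fun m => by positivity
  have hvnn : ∀ n, 0 ≤ v n := fun n => (Real.exp_pos _).le
  -- pointwise bound
  have hbound : ∀ q : ℕ × ℕ,
      ((q.1 + 1 : ℝ))⁻¹ * (Real.sqrt (q.2 + 1) *
        g (4 * π ^ 2 * (q.2 + 1) * (q.1 + 1) ^ 2 / W)) ≤ K * (u q.1 * v q.2) := by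
    intro q
    set M : ℝ := (q.1:ℝ) + 1 with hMdef
    set N : ℝ := (q.2:ℝ) + 1 with hNdef
    have hM : 1 ≤ M := by
      show (1:ℝ) ≤ (q.1:ℝ)+1
      have := Nat.cast_nonneg (α := ℝ) q.1; linarith
    have hN : 1 ≤ N := by
      show (1:ℝ) ≤ (q.2:ℝ)+1
      have := Nat.cast_nonneg (α := ℝ) q.2; linarith
    have hM0 : 0 < M := by linarith
    have hN0 : 0 < N := by linarith
    set X : ℝ := 4 * π ^ 2 * N * M ^ 2 / W with hXdef
    have hX : 0 < X := by positivity
    obtain ⟨hg0, hgle⟩ := hg X hX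
    have hNsq : Real.sqrt N * Real.sqrt N = N := Real.mul_self_sqrt hN0.le
    have hs : Real.sqrt X = 2*a*M*Real.sqrt N := by
      have e1 : Real.sqrt N ^ 2 = N := Real.sq_sqrt hN0.le
      have hXeq : X = (2*a*M*Real.sqrt N)^2 := by
        rw [hXdef]
        calc 4 * π ^ 2 * N * M ^ 2 / W = 4*(π^2/W)*M^2*N := by ring
          _ = 4*a^2*M^2*(Real.sqrt N^2) := by rw [e1, hta]
          _ = (2*a*M*Real.sqrt N)^2 := by ring
      rw [hXeq, Real.sqrt_sq (by positivity)]
    have hX4 : X ^ (-(1/4 : ℝ)) = (Real.sqrt (Real.sqrt X))⁻¹ := by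
      rw [Real.rpow_neg hX.le]
      congr 1
      rw [Real.sqrt_eq_rpow, Real.sqrt_eq_rpow, ← Real.rpow_mul hX.le]
      norm_num
    have hexp2 : Real.exp (-2 * Real.sqrt X) = Real.exp (-(2 * Real.sqrt X)) := by
      congr 1; ring
    have hgle' : g X ≤ C * ((Real.sqrt (Real.sqrt X))⁻¹ * Real.exp (-(2 * Real.sqrt X))) := by
      rw [← hexp2, ← hX4]
      calc g X ≤ C * X ^ (-(1/4 : ℝ)) * Real.exp (-2 * Real.sqrt X) := hgle
        _ = C * (X ^ (-(1/4 : ℝ)) * Real.exp (-2 * Real.sqrt X)) := by ring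
    have hcore := core a M N (Real.sqrt X) ha hM hN hs
    have step : ((q.1 + 1 : ℝ))⁻¹ * (Real.sqrt (q.2 + 1) *
        g (4 * π ^ 2 * (q.2 + 1) * (q.1 + 1) ^ 2 / W))
        = M⁻¹ * (Real.sqrt N * g X) := rfl
    rw [step]
    have hchain : M⁻¹ * (Real.sqrt N * g X)
        ≤ M⁻¹ * (Real.sqrt N * (C * ((Real.sqrt (Real.sqrt X))⁻¹ * Real.exp (-(2 * Real.sqrt X))))) := by
      apply mul_le_mul_of_nonneg_left _ (by positivity)
      exact mul_le_mul_of_nonneg_left hgle' (Real.sqrt_nonneg _)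
    have hre : M⁻¹ * (Real.sqrt N * (C * ((Real.sqrt (Real.sqrt X))⁻¹ * Real.exp (-(2 * Real.sqrt X)))))
        = C * M⁻¹ * (Real.sqrt N * ((Real.sqrt (Real.sqrt X))⁻¹ * Real.exp (-(2 * Real.sqrt X)))) := by
      ring
    have hfinal : C * M⁻¹ * (Real.sqrt N * ((Real.sqrt (Real.sqrt X))⁻¹ * Real.exp (-(2 * Real.sqrt X))))
        ≤ C * M⁻¹ * ((2*a*M)⁻¹ * (Real.exp (-(a*M)) * Real.exp (-(a*Real.sqrt N)))) := by
      apply mul_le_mul_of_nonneg_left hcore (by positivity)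
    have hid : C * M⁻¹ * ((2*a*M)⁻¹ * (Real.exp (-(a*M)) * Real.exp (-(a*Real.sqrt N))))
        = K * (u q.1 * v q.2) := by
      show _ = K * (((M)^2)⁻¹ * Real.exp (-(a*M)) * Real.exp (-(a * Real.sqrt N)))
      rw [hK, haDef]
      have hπ : π ≠ 0 := Real.pi_ne_zero
      field_simp
    calc M⁻¹ * (Real.sqrt N * g X)
        ≤ M⁻¹ * (Real.sqrt N * (C * ((Real.sqrt (Real.sqrt X))⁻¹ * Real.exp (-(2 * Real.sqrt X))))) := hchain
      _ = C * M⁻¹ * (Real.sqrt N * ((Real.sqrt (Real.sqrt X))⁻¹ * Real.exp (-(2 * Real.sqrt X)))) := hre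
      _ ≤ C * M⁻¹ * ((2*a*M)⁻¹ * (Real.exp (-(a*M)) * Real.exp (-(a*Real.sqrt N)))) := hfinal
      _ = K * (u q.1 * v q.2) := hid
  have hU := sumu a ha
  have hV := sumv a ha
  have hProd : Summable (fun q : ℕ × ℕ => u q.1 * v q.2) :=
    hU.1.mul_of_nonneg hV.1 hunn hvnn
  have hKProd : Summable (fun q : ℕ × ℕ => K * (u q.1 * v q.2)) := hProd.mul_left K
  have hnn : ∀ q : ℕ × ℕ, 0 ≤ ((q.1 + 1 : ℝ))⁻¹ * (Real.sqrt (q.2 + 1) *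
      g (4 * π ^ 2 * (q.2 + 1) * (q.1 + 1) ^ 2 / W)) := by
    intro q
    have hX : 0 < 4 * π ^ 2 * ((q.2:ℝ) + 1) * ((q.1:ℝ) + 1) ^ 2 / W := by positivity
    have := (hg _ hX).1
    have h1 : (0:ℝ) ≤ ((q.1:ℝ) + 1)⁻¹ := by positivity
    exact mul_nonneg h1 (mul_nonneg (Real.sqrt_nonneg _) this)
  have hSummable : Summable (fun q : ℕ × ℕ =>
      ((q.1 + 1 : ℝ))⁻¹ * (Real.sqrt (q.2 + 1) *
        g (4 * π ^ 2 * (q.2 + 1) * (q.1 + 1) ^ 2 / W))) :=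
    Summable.of_nonneg_of_le hnn hbound hKProd
  refine ⟨hSummable, ?_⟩
  have htsum1 : (∑' q : ℕ × ℕ,
      ((q.1 + 1 : ℝ))⁻¹ * (Real.sqrt (q.2 + 1) *
        g (4 * π ^ 2 * (q.2 + 1) * (q.1 + 1) ^ 2 / W)))
      ≤ ∑' q : ℕ × ℕ, K * (u q.1 * v q.2) :=
    Summable.tsum_le_tsum hbound hSummable hKProd
  have htsum2 : (∑' q : ℕ × ℕ, K * (u q.1 * v q.2)) = K * ((∑' m, u m) * (∑' n, v n)) := by
    rw [tsum_mul_left]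
    congr 1
    rw [Summable.tsum_prod' hProd (fun m => hV.1.mul_left (u m))]
    have h1 : ∀ m : ℕ, ∑' n, u m * v n = u m * ∑' n, v n := fun m => tsum_mul_left
    simp_rw [h1]
    exact tsum_mul_right
  have htv : (∑' n, v n) ≤ 12 * W / π^2 := by
    have h := hV.2
    rw [hta] at h
    calc (∑' n, v n) ≤ 12 / (π^2 / W) := h
      _ = 12 * W / π^2 := by
        rw [div_div_eq_mul_div]
  have hub : 0 ≤ ∑' m, u m := tsum_nonneg hunn
  have hvb : 0 ≤ ∑' n, v n := tsum_nonneg hvnn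
  have hmul : (∑' m, u m) * (∑' n, v n) ≤ 2 * (12 * W / π^2) :=
    mul_le_mul hU.2 htv hvb (by norm_num)
  have hW32 : W ^ ((3:ℝ)/2) = W * Real.sqrt W := by
    rw [show (3:ℝ)/2 = 1 + 1/2 by norm_num, Real.rpow_add hW0, Real.rpow_one,
      ← Real.sqrt_eq_rpow]
  have hπ3 : 12 ≤ π^3 := by nlinarith [Real.pi_gt_three]
  calc (∑' q : ℕ × ℕ,
      ((q.1 + 1 : ℝ))⁻¹ * (Real.sqrt (q.2 + 1) *
        g (4 * π ^ 2 * (q.2 + 1) * (q.1 + 1) ^ 2 / W)))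
      ≤ K * ((∑' m, u m) * (∑' n, v n)) := by rw [← htsum2]; exact htsum1
    _ ≤ K * (2 * (12 * W / π^2)) := mul_le_mul_of_nonneg_left hmul hKpos.le
    _ = 12 * C * (W * Real.sqrt W) / π^3 := by
        rw [hK]
        field_simp
    _ ≤ C * (W * Real.sqrt W) := by
        rw [div_le_iff₀ (by positivity : (0:ℝ) < π^3)]
        nlinarith [mul_pos (mul_pos hC hW0) hsW]
    _ = C * W ^ ((3:ℝ)/2) := by rw [hW32]
end
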